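/- arXiv:2508.08788 — 3 statements merged into one kernel-verified Lean document; each statement's English description precedes it below -/
import Mathlib

section
/- Let p be a prime and ξ a Z-valued random variable with 0 < P(p divides ξ) < 1. Let H be a finite abelian p-group, m a positive integer, v ∈ H^m, and let ξ_1,…,ξ_m be i.i.d. copies of ξ. Then there exists a constant c > 0 (depending only on H and ξ) such that |#H · P(Σ_{i=1}^m ξ_i v_i = 0) − 1| ≤ Σ_{ρ ∈ Ĥ, ρ ≠ 1} exp(−c · ‖v‖_ρ), where ‖v‖_ρ = #{1 ≤ i ≤ m : v_i ∉ ker ρ}. -/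
open MeasureTheory ProbabilityTheory Finset

section aux
variable {Ω : Type*} [MeasurableSpace Ω] {μ : Measure Ω}

private lemma integral_re' (f : Ω → ℂ) (hf : Integrable f μ) :
    (∫ ω, f ω ∂μ).re = ∫ ω, (f ω).re ∂μ := by
  simpa using (Complex.reCLM.integral_comp_comm hf).symm

private lemma integral_im' (f : Ω → ℂ) (hf : Integrable f μ) :
    (∫ ω, f ω ∂μ).im = ∫ ω, (f ω).im ∂μ := by
  simpa using (Complex.imCLM.integral_comp_comm hf).symm

private lemma int_of_bddC [IsProbabilityMeasure μ] {g : Ω → ℂ} (hg : Measurable g)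
    {C : ℝ} (h : ∀ ω, ‖g ω‖ ≤ C) : Integrable g μ :=
  Integrable.mono' (integrable_const C) hg.aestronglyMeasurable (Filter.Eventually.of_forall h)

private lemma int_of_bddR [IsProbabilityMeasure μ] {g : Ω → ℝ} (hg : Measurable g)
    {C : ℝ} (h : ∀ ω, ‖g ω‖ ≤ C) : Integrable g μ :=
  Integrable.mono' (integrable_const C) hg.aestronglyMeasurable (Filter.Eventually.of_forall h)

private lemma indep_integral_mul_c [IsProbabilityMeasure μ] {X Y : Ω → ℂ}
    (hXY : IndepFun X Y μ) (hXm : Measurable X) (hYm : Measurable Y)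
    (hXb : ∀ ω, ‖X ω‖ ≤ 1) (hYb : ∀ ω, ‖Y ω‖ ≤ 1) :
    ∫ ω, X ω * Y ω ∂μ = (∫ ω, X ω ∂μ) * ∫ ω, Y ω ∂μ := by
  have habs : ∀ (z : ℂ), |z.re| ≤ ‖z‖ ∧ |z.im| ≤ ‖z‖ := fun z =>
    ⟨Complex.abs_re_le_norm z, Complex.abs_im_le_norm z⟩
  have hXrm : Measurable fun ω => (X ω).re := Complex.measurable_re.comp hXm
  have hXim : Measurable fun ω => (X ω).im := Complex.measurable_im.comp hXm
  have hYrm : Measurable fun ω => (Y ω).re := Complex.measurable_re.comp hYm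
  have hYim : Measurable fun ω => (Y ω).im := Complex.measurable_im.comp hYm
  have hXi : Integrable X μ := int_of_bddC hXm hXb
  have hYi : Integrable Y μ := int_of_bddC hYm hYb
  have hXYi : Integrable (fun ω => X ω * Y ω) μ := by
    refine int_of_bddC (hXm.mul hYm) (C := 1) fun ω => ?_
    rw [norm_mul]
    calc ‖X ω‖ * ‖Y ω‖ ≤ 1 * 1 := by
          exact mul_le_mul (hXb ω) (hYb ω) (norm_nonneg _) zero_le_one
      _ = 1 := one_mul 1
  have bdd : ∀ (u v : Ω → ℝ), Measurable u → Measurable v →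
      (∀ ω, |u ω| ≤ 1) → (∀ ω, |v ω| ≤ 1) → Integrable (fun ω => u ω * v ω) μ := by
    intro u v hu hv hub hvb
    refine int_of_bddR (hu.mul hv) (C := 1) fun ω => ?_
    rw [Real.norm_eq_abs, abs_mul]
    calc |u ω| * |v ω| ≤ 1 * 1 :=
          mul_le_mul (hub ω) (hvb ω) (abs_nonneg _) zero_le_one
      _ = 1 := one_mul 1
  have hXrb : ∀ ω, |(X ω).re| ≤ 1 := fun ω => le_trans (habs _).1 (hXb ω)
  have hXib : ∀ ω, |(X ω).im| ≤ 1 := fun ω => le_trans (habs _).2 (hXb ω)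
  have hYrb : ∀ ω, |(Y ω).re| ≤ 1 := fun ω => le_trans (habs _).1 (hYb ω)
  have hYib : ∀ ω, |(Y ω).im| ≤ 1 := fun ω => le_trans (habs _).2 (hYb ω)
  have hrr : IndepFun (fun ω => (X ω).re) (fun ω => (Y ω).re) μ :=
    hXY.comp Complex.measurable_re Complex.measurable_re
  have hri : IndepFun (fun ω => (X ω).re) (fun ω => (Y ω).im) μ :=
    hXY.comp Complex.measurable_re Complex.measurable_im
  have hir : IndepFun (fun ω => (X ω).im) (fun ω => (Y ω).re) μ :=
    hXY.comp Complex.measurable_im Complex.measurable_re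
  have hii : IndepFun (fun ω => (X ω).im) (fun ω => (Y ω).im) μ :=
    hXY.comp Complex.measurable_im Complex.measurable_im
  have err := hrr.integral_fun_mul_eq_mul_integral hXrm.aestronglyMeasurable hYrm.aestronglyMeasurable
  have eri := hri.integral_fun_mul_eq_mul_integral hXrm.aestronglyMeasurable hYim.aestronglyMeasurable
  have eir := hir.integral_fun_mul_eq_mul_integral hXim.aestronglyMeasurable hYrm.aestronglyMeasurable
  have eii := hii.integral_fun_mul_eq_mul_integral hXim.aestronglyMeasurable hYim.aestronglyMeasurable
  apply Complex.ext
  · rw [integral_re' _ hXYi, Complex.mul_re, integral_re' _ hXi, integral_re' _ hYi,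
      integral_im' _ hXi, integral_im' _ hYi]
    have : (fun ω => (X ω * Y ω).re)
        = fun ω => (X ω).re * (Y ω).re - (X ω).im * (Y ω).im :=
      funext fun ω => Complex.mul_re _ _
    rw [this, integral_sub (bdd _ _ hXrm hYrm hXrb hYrb) (bdd _ _ hXim hYim hXib hYib),
      err, eii]
  · rw [integral_im' _ hXYi, Complex.mul_im, integral_re' _ hXi, integral_re' _ hYi,
      integral_im' _ hXi, integral_im' _ hYi]
    have : (fun ω => (X ω * Y ω).im)
        = fun ω => (X ω).re * (Y ω).im + (X ω).im * (Y ω).re :=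
      funext fun ω => Complex.mul_im _ _
    rw [this, integral_add (bdd _ _ hXrm hYim hXrb hYib) (bdd _ _ hXim hYrm hXib hYrb),
      eri, eir]

private lemma integral_prod_indep [IsProbabilityMeasure μ] {m : ℕ}
    {g : Fin m → Ω → ℂ} (hmeas : ∀ i, Measurable (g i)) (hbd : ∀ i ω, ‖g i ω‖ ≤ 1)
    (hindep : iIndepFun g μ) (s : Finset (Fin m)) :
    ∫ ω, ∏ i ∈ s, g i ω ∂μ = ∏ i ∈ s, ∫ ω, g i ω ∂μ := by
  classical
  have hprodb : ∀ (t : Finset (Fin m)) ω, ‖∏ j ∈ t, g j ω‖ ≤ 1 := by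
    intro t ω
    calc ‖∏ j ∈ t, g j ω‖ ≤ ∏ j ∈ t, ‖g j ω‖ := norm_prod_le _ _
      _ ≤ ∏ _j ∈ t, (1:ℝ) := Finset.prod_le_prod (fun j _ => norm_nonneg _) (fun j _ => hbd j ω)
      _ = 1 := by simp
  have hprodm : ∀ t : Finset (Fin m), Measurable (fun ω => ∏ j ∈ t, g j ω) :=
    fun t => Finset.measurable_prod t (fun j _ => hmeas j)
  induction s using Finset.cons_induction with
  | empty => simp
  | cons i s hi ih =>
    simp only [Finset.prod_cons]
    have hI : IndepFun (g i) (fun ω => ∏ j ∈ s, g j ω) μ := by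
      have h := (hindep.indepFun_finsetProd_of_notMem hmeas hi).symm
      have hfn : (∏ j ∈ s, g j) = fun ω => ∏ j ∈ s, g j ω :=
        funext fun ω => by simp
      rwa [hfn] at h
    rw [indep_integral_mul_c hI (hmeas i) (hprodm s) (hbd i) (hprodb s), ih]

private lemma norm_integral_le_of_sep [IsProbabilityMeasure μ] {f : Ω → ℂ}
    (hfm : Measurable f) (hnorm : ∀ ω, ‖f ω‖ = 1) {A : Set Ω} (hA : MeasurableSet A)
    {e : ℝ} (he : 0 ≤ e) (hsep : ∀ ω ∈ A, ∀ ω' ∈ Aᶜ, e ≤ ‖f ω - f ω'‖) :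
    ‖∫ ω, f ω ∂μ‖ ≤ 1 - e ^ 2 / 8 * min (μ A).toReal (μ Aᶜ).toReal := by
  set I := ∫ ω, f ω ∂μ with hIdef
  have hfi : Integrable f μ := int_of_bddC hfm (C := 1) fun ω => le_of_eq (hnorm ω)
  set w : ℂ := if I = 0 then 1 else (‖I‖⁻¹ : ℝ) • I with hwdef
  have hw1 : ‖w‖ = 1 := by
    by_cases h : I = 0
    · simp [hwdef, h]
    · have hn : ‖I‖ ≠ 0 := norm_ne_zero_iff.mpr h
      rw [hwdef, if_neg h, norm_smul, Real.norm_eq_abs, abs_inv, abs_norm]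
      field_simp
  -- pointwise identity
  have hgm : Measurable fun ω => ‖w - f ω‖ ^ 2 :=
    ((measurable_const.sub hfm).norm).pow_const 2
  have hgb : ∀ ω, ‖(‖w - f ω‖ ^ 2 : ℝ)‖ ≤ 4 := by
    intro ω
    have h1 : ‖w - f ω‖ ≤ 2 := by
      calc ‖w - f ω‖ ≤ ‖w‖ + ‖f ω‖ := norm_sub_le _ _
        _ = 2 := by rw [hw1, hnorm ω]; norm_num
    rw [Real.norm_eq_abs, abs_of_nonneg (by positivity)]
    nlinarith [norm_nonneg (w - f ω)]
  have hgi : Integrable (fun ω => ‖w - f ω‖ ^ 2) μ := int_of_bddR hgm hgb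
  have hptw : ∀ ω, ((starRingEnd ℂ) w * f ω).re = 1 - ‖w - f ω‖ ^ 2 / 2 := by
    intro ω
    have h1 : w.re ^ 2 + w.im ^ 2 = 1 := by
      have := hw1
      rw [← Real.sqrt_one] at this
      have h2 : Complex.normSq w = 1 := by
        have := congrArg (fun x : ℝ => x ^ 2) hw1
        simpa [Complex.sq_norm] using this
      simpa [Complex.normSq_apply, sq] using h2
    have h2 : (f ω).re ^ 2 + (f ω).im ^ 2 = 1 := by
      have h2 : Complex.normSq (f ω) = 1 := by
        have := congrArg (fun x : ℝ => x ^ 2) (hnorm ω)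
        simpa [Complex.sq_norm] using this
      simpa [Complex.normSq_apply, sq] using h2
    have h3 : ‖w - f ω‖ ^ 2 = (w.re - (f ω).re) ^ 2 + (w.im - (f ω).im) ^ 2 := by
      rw [Complex.sq_norm, Complex.normSq_apply, Complex.sub_re,
        Complex.sub_im]
      ring
    rw [Complex.mul_re, Complex.conj_re, Complex.conj_im, h3]
    nlinarith [h1, h2]
  have habs : ‖I‖ = ((starRingEnd ℂ) w * I).re := by
    by_cases h : I = 0
    · simp [h]
    · have hn : ‖I‖ ≠ 0 := norm_ne_zero_iff.mpr h
      have : (starRingEnd ℂ) w * I = ((‖I‖ : ℝ) : ℂ) := by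
        rw [hwdef, if_neg h, Complex.real_smul, map_mul, Complex.conj_ofReal]
        rw [mul_assoc, mul_comm ((starRingEnd ℂ) I) I, Complex.mul_conj]
        rw [Complex.normSq_eq_norm_sq]
        rw [← Complex.ofReal_mul]
        congr 1
        field_simp
      rw [this, Complex.ofReal_re]
  have key : ((starRingEnd ℂ) w * I).re = 1 - (∫ ω, ‖w - f ω‖ ^ 2 ∂μ) / 2 := by
    rw [hIdef, ← integral_const_mul ((starRingEnd ℂ) w) f,
      integral_re' _ (hfi.const_mul _)]
    have : (fun ω => ((starRingEnd ℂ) w * f ω).re)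
        = fun ω => 1 - ‖w - f ω‖ ^ 2 / 2 := funext hptw
    rw [this, integral_sub (integrable_const 1) (hgi.div_const 2), integral_const,
      integral_div]
    simp [measure_univ]
  have hlow : e ^ 2 / 4 * min (μ A).toReal (μ Aᶜ).toReal ≤ ∫ ω, ‖w - f ω‖ ^ 2 ∂μ := by
    have hnn : (0:ℝ) ≤ e ^ 2 / 4 := by positivity
    by_cases hc : ∃ ω₀ ∈ A, ‖w - f ω₀‖ < e / 2
    · obtain ⟨ω₀, hω₀, hsmall⟩ := hc
      have hbig : ∀ ω' ∈ Aᶜ, e / 2 ≤ ‖w - f ω'‖ := by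
        intro ω' hω'
        have h := hsep ω₀ hω₀ ω' hω'
        have h2 := norm_add_le (f ω₀ - w) (w - f ω')
        rw [sub_add_sub_cancel, norm_sub_rev (f ω₀) w] at h2
        linarith
      calc e ^ 2 / 4 * min (μ A).toReal (μ Aᶜ).toReal
          ≤ e ^ 2 / 4 * (μ Aᶜ).toReal :=
            mul_le_mul_of_nonneg_left (min_le_right _ _) hnn
        _ ≤ ∫ ω in Aᶜ, ‖w - f ω‖ ^ 2 ∂μ := by
            have : e ^ 2 / 4 = (e / 2) ^ 2 := by ring
            rw [this]
            exact setIntegral_ge_of_const_le_real (c := (e / 2) ^ 2) hA.compl (measure_ne_top μ _)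
              (fun ω hω => by nlinarith [hbig ω hω, norm_nonneg (w - f ω)])
              hgi.integrableOn
        _ ≤ ∫ ω, ‖w - f ω‖ ^ 2 ∂μ :=
            setIntegral_le_integral hgi (Filter.Eventually.of_forall fun ω => by positivity)
    · push_neg at hc
      calc e ^ 2 / 4 * min (μ A).toReal (μ Aᶜ).toReal
          ≤ e ^ 2 / 4 * (μ A).toReal :=
            mul_le_mul_of_nonneg_left (min_le_left _ _) hnn
        _ ≤ ∫ ω in A, ‖w - f ω‖ ^ 2 ∂μ := by
            have : e ^ 2 / 4 = (e / 2) ^ 2 := by ring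
            rw [this]
            exact setIntegral_ge_of_const_le_real (c := (e / 2) ^ 2) hA (measure_ne_top μ _)
              (fun ω hω => by nlinarith [hc ω hω, norm_nonneg (w - f ω)])
              hgi.integrableOn
        _ ≤ ∫ ω, ‖w - f ω‖ ^ 2 ∂μ :=
            setIntegral_le_integral hgi (Filter.Eventually.of_forall fun ω => by positivity)
  rw [habs, key]
  linarith

end aux

/-- Let `p` be a prime and `ξ` a `ℤ`-valued random variable with
`0 < P(p ∣ ξ) < 1`. Let `H` be a finite abelian `p`-group. Then there is a constant
`c > 0` (depending only on `H` and `ξ`) such that for every `m ≥ 1`, every `v ∈ H^m`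
and i.i.d. copies `ξ₁, …, ξ_m` of `ξ`,
`|#H ⬝ P(∑ ξᵢ • vᵢ = 0) − 1| ≤ ∑_{ρ ≠ 1} exp(−c‖v‖_ρ)`,
where `‖v‖_ρ = #{i : vᵢ ∉ ker ρ}`. -/
theorem stmt0 (p : ℕ) (hp : p.Prime)
    {Ω : Type*} [MeasurableSpace Ω] (μ : Measure Ω) [IsProbabilityMeasure μ]
    (ξ : Ω → ℤ) (hξmeas : Measurable ξ)
    (hξ0 : 0 < μ {ω | (p : ℤ) ∣ ξ ω}) (hξ1 : μ {ω | (p : ℤ) ∣ ξ ω} < 1)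
    (H : Type*) [AddCommGroup H] [Fintype H]
    (hH : ∀ h : H, ∃ n : ℕ, (p ^ n : ℤ) • h = 0) :
    ∃ c : ℝ, 0 < c ∧
      ∀ (m : ℕ), 0 < m → ∀ (v : Fin m → H) (ξs : Fin m → Ω → ℤ),
        (∀ i, Measurable (ξs i)) →
        iIndepFun ξs μ →
        (∀ i, IdentDistrib (ξs i) ξ μ μ) →
        |(Fintype.card H : ℝ) * (μ {ω | ∑ i, ξs i ω • v i = 0}).toReal - 1| ≤
          ∑ ρ ∈ Finset.univ.filter (fun ρ : AddChar H ℂ => ρ ≠ 1),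
            Real.exp (-c * (Finset.univ.filter (fun i => ρ (v i) ≠ 1)).card) := by
  classical
  set A : Set Ω := {ω | (p : ℤ) ∣ ξ ω} with hAdef
  have hA : MeasurableSet A :=
    hξmeas ((Set.to_countable {x : ℤ | (p : ℤ) ∣ x}).measurableSet)
  choose nn hnn using hH
  set N : ℕ := Finset.univ.sup nn with hNdef
  set q : ℕ := p ^ N with hqdef
  have hq0 : 0 < q := pow_pos hp.pos N
  have hqsmul : ∀ h : H, q • h = 0 := by
    intro h
    have h2 : nn h ≤ N := Finset.le_sup (Finset.mem_univ h)
    have h3 : q = p ^ (N - nn h) * p ^ (nn h) := by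
      rw [hqdef, ← pow_add, Nat.sub_add_cancel h2]
    have h4 : (p ^ nn h) • h = 0 := by
      have h5 := hnn h
      rw [show ((p : ℤ) ^ nn h) = ((p ^ nn h : ℕ) : ℤ) by push_cast; ring] at h5
      rwa [natCast_zsmul] at h5
    rw [h3, mul_smul, h4, smul_zero]
  -- the minimal distance between roots of unity
  set T : Finset ℝ :=
    insert 2 (((Polynomial.nthRootsFinset q (1 : ℂ)).erase 1).image fun z => ‖1 - z‖) with hTdef
  have hTne : T.Nonempty := ⟨2, Finset.mem_insert_self _ _⟩
  set d : ℝ := T.min' hTne with hddef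
  have hd2 : d ≤ 2 := Finset.min'_le _ _ (Finset.mem_insert_self _ _)
  have hdpos : 0 < d := by
    have hmem : d ∈ T := T.min'_mem hTne
    rw [hTdef] at hmem
    rcases Finset.mem_insert.mp hmem with h | h
    · rw [h]; norm_num
    · obtain ⟨z, hz, hz2⟩ := Finset.mem_image.mp h
      have hz1 : z ≠ 1 := (Finset.mem_erase.mp hz).1
      rw [← hz2]
      exact norm_pos_iff.mpr (sub_ne_zero.mpr (Ne.symm hz1))
  have hdle : ∀ z : ℂ, z ^ q = 1 → z ≠ 1 → d ≤ ‖1 - z‖ := by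
    intro z h1 h2
    apply Finset.min'_le
    rw [hTdef]
    exact Finset.mem_insert_of_mem (Finset.mem_image.mpr ⟨z,
      Finset.mem_erase.mpr ⟨h2, (Polynomial.mem_nthRootsFinset hq0 (1 : ℂ)).mpr h1⟩, rfl⟩)
  set a : ℝ := (μ A).toReal with hadef
  have ha0 : 0 < a := ENNReal.toReal_pos (ne_of_gt hξ0) (measure_ne_top μ A)
  have ha1 : a < 1 := by
    rw [hadef, ← ENNReal.toReal_one]
    exact (ENNReal.toReal_lt_toReal (measure_ne_top μ A) ENNReal.one_ne_top).mpr hξ1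
  have hacompl : (μ Aᶜ).toReal = 1 - a := by
    rw [measure_compl hA (measure_ne_top μ A), measure_univ,
      ENNReal.toReal_sub_of_le hξ1.le ENNReal.one_ne_top, ENNReal.toReal_one, hadef]
  set K : ℝ := d ^ 2 / 8 * min a (1 - a) with hKdef
  have hK0 : 0 < K := mul_pos (by positivity) (lt_min ha0 (by linarith))
  have hK1 : K ≤ 1 / 2 := by
    have h1 : min a (1 - a) ≤ 1 := le_trans (min_le_left _ _) ha1.le
    have h2 : 0 ≤ min a (1 - a) := le_of_lt (lt_min ha0 (by linarith))
    nlinarith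
  set B : ℝ := 1 - K with hBdef
  have hB0 : 0 < B := by rw [hBdef]; linarith
  have hB1 : B < 1 := by rw [hBdef]; linarith
  refine ⟨-Real.log B, by have := Real.log_neg hB0 hB1; linarith, ?_⟩
  intro m hm v ξs hmeas hindep hid
  have hexp : Real.exp (Real.log B) = B := Real.exp_log hB0
  have hSmeas : MeasurableSet {ω | ∑ i, ξs i ω • v i = 0} := by
    have heq : {ω | ∑ i, ξs i ω • v i = 0}
        = (fun ω => fun i => ξs i ω) ⁻¹' {x : Fin m → ℤ | ∑ i, x i • v i = 0} := rfl
    rw [heq]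
    exact (measurable_pi_lambda _ fun i => hmeas i) ((Set.to_countable _).measurableSet)
  set gg : AddChar H ℂ → Fin m → Ω → ℂ := fun ρ i ω => ρ (v i) ^ ξs i ω with hggdef
  have hgm : ∀ ρ i, Measurable (gg ρ i) := fun ρ i =>
    (measurable_of_countable fun n : ℤ => ρ (v i) ^ n).comp (hmeas i)
  have hgb : ∀ ρ i ω, ‖gg ρ i ω‖ ≤ 1 := by
    intro ρ i ω
    rw [hggdef]
    simp only
    rw [norm_zpow, AddChar.norm_apply, one_zpow]
  have hgindep : ∀ ρ : AddChar H ℂ, iIndepFun (gg ρ) μ := by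
    intro ρ
    exact hindep.comp (fun i => fun n : ℤ => ρ (v i) ^ n)
      (fun i => measurable_of_countable _)
  have hprodbd : ∀ (ρ : AddChar H ℂ) ω, ‖∏ i, gg ρ i ω‖ ≤ 1 := by
    intro ρ ω
    calc ‖∏ i, gg ρ i ω‖ ≤ ∏ i, ‖gg ρ i ω‖ := norm_prod_le _ _
      _ ≤ ∏ _i : Fin m, (1 : ℝ) :=
          Finset.prod_le_prod (fun i _ => norm_nonneg _) (fun i _ => hgb ρ i ω)
      _ = 1 := by simp
  have hGint : ∀ ρ : AddChar H ℂ, Integrable (fun ω => ∏ i, gg ρ i ω) μ := fun ρ =>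
    int_of_bddC (Finset.measurable_prod _ fun i _ => hgm ρ i) (hprodbd ρ)
  have hmapsum : ∀ (ρ : AddChar H ℂ) (x : Fin m → H) (s : Finset (Fin m)),
      ρ (∑ i ∈ s, x i) = ∏ i ∈ s, ρ (x i) := by
    intro ρ x s
    induction s using Finset.cons_induction with
    | empty => simp [AddChar.map_zero_eq_one]
    | cons i s hi ih => rw [Finset.sum_cons, Finset.prod_cons, AddChar.map_add_eq_mul, ih]
  have hsum : (((Fintype.card H : ℝ) * (μ {ω | ∑ i, ξs i ω • v i = 0}).toReal : ℝ) : ℂ)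
      = ∑ ρ : AddChar H ℂ, ∫ ω, ∏ i, gg ρ i ω ∂μ := by
    rw [← integral_finset_sum _ (fun ρ _ => hGint ρ)]
    have hpt : (fun ω => ∑ ρ : AddChar H ℂ, ∏ i, gg ρ i ω)
        = Set.indicator {ω | ∑ i, ξs i ω • v i = 0} (fun _ => (Fintype.card H : ℂ)) := by
      funext ω
      have h1 : ∀ ρ : AddChar H ℂ, ∏ i, gg ρ i ω = ρ (∑ i, ξs i ω • v i) := by
        intro ρ
        rw [hmapsum ρ _ Finset.univ]
        exact Finset.prod_congr rfl fun i _ => (AddChar.map_zsmul_eq_zpow ρ _ _).symm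
      simp_rw [h1]
      rw [AddChar.sum_apply_eq_ite]
      by_cases h : ∑ i, ξs i ω • v i = 0
      · simp [h, Set.indicator_of_mem, Set.mem_setOf_eq]
      · simp [h]
    rw [hpt, integral_indicator_const _ hSmeas]
    push_cast
    rw [Complex.real_smul]
    ring
    rfl
  have hsplit : ∑ ρ : AddChar H ℂ, ∫ ω, ∏ i, gg ρ i ω ∂μ
      = 1 + ∑ ρ ∈ Finset.univ.filter (fun ρ : AddChar H ℂ => ρ ≠ 1),
          ∫ ω, ∏ i, gg ρ i ω ∂μ := by
    rw [← Finset.sum_filter_add_sum_filter_not Finset.univ (fun ρ : AddChar H ℂ => ρ ≠ 1)]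
    rw [add_comm]
    congr 1
    have h2 : Finset.univ.filter (fun ρ : AddChar H ℂ => ¬ ρ ≠ 1) = {1} := by
      ext ρ; simp
    rw [h2, Finset.sum_singleton]
    have h3 : ∀ ω, ∏ i, gg (1 : AddChar H ℂ) i ω = 1 := by
      intro ω
      apply Finset.prod_eq_one
      intro i _
      rw [hggdef]
      simp only [AddChar.one_apply, one_zpow]
    simp only [h3]
    simp [measure_univ]
  have habs2 : |(Fintype.card H : ℝ) * (μ {ω | ∑ i, ξs i ω • v i = 0}).toReal - 1|
      = ‖∑ ρ ∈ Finset.univ.filter (fun ρ : AddChar H ℂ => ρ ≠ 1),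
          ∫ ω, ∏ i, gg ρ i ω ∂μ‖ := by
    have h1 : (((Fintype.card H : ℝ) * (μ {ω | ∑ i, ξs i ω • v i = 0}).toReal - 1 : ℝ) : ℂ)
        = ∑ ρ ∈ Finset.univ.filter (fun ρ : AddChar H ℂ => ρ ≠ 1),
            ∫ ω, ∏ i, gg ρ i ω ∂μ := by
      rw [Complex.ofReal_sub, Complex.ofReal_one, hsum, hsplit]
      ring
    rw [← Real.norm_eq_abs, ← Complex.norm_real, h1]
  rw [habs2]
  refine le_trans (norm_sum_le _ _) (Finset.sum_le_sum ?_)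
  intro ρ hρ
  have hρ1 : ρ ≠ 1 := (Finset.mem_filter.mp hρ).2
  -- key bound for a single factor
  have hkey : ∀ i, ρ (v i) ≠ 1 → ‖∫ ω, gg ρ i ω ∂μ‖ ≤ B := by
    intro i hne
    have hζq : (ρ (v i)) ^ q = 1 := by
      rw [← AddChar.map_nsmul_eq_pow, hqsmul, AddChar.map_zero_eq_one]
    have hζ0 : ρ (v i) ≠ 0 := by
      intro h
      rw [h, zero_pow hq0.ne'] at hζq
      exact one_ne_zero hζq.symm
    have hζnorm : ‖ρ (v i)‖ = 1 := AddChar.norm_apply ρ (v i)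
    have hident : ∫ ω, gg ρ i ω ∂μ = ∫ ω, ρ (v i) ^ ξ ω ∂μ := by
      have h1 : IdentDistrib (fun ω => ρ (v i) ^ ξs i ω) (fun ω => ρ (v i) ^ ξ ω) μ μ := by
        have h2 := (hid i).comp (u := fun n : ℤ => ρ (v i) ^ n)
          (measurable_of_countable _)
        simpa [Function.comp_def] using h2
      exact h1.integral_eq
    rw [hident]
    have hfm : Measurable fun ω => ρ (v i) ^ ξ ω :=
      (measurable_of_countable fun n : ℤ => ρ (v i) ^ n).comp hξmeas
    have hfn : ∀ ω, ‖ρ (v i) ^ ξ ω‖ = 1 := fun ω => by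
      rw [norm_zpow, hζnorm, one_zpow]
    have hsep : ∀ ω ∈ A, ∀ ω' ∈ Aᶜ, d ≤ ‖ρ (v i) ^ ξ ω - ρ (v i) ^ ξ ω'‖ := by
      intro ω hω ω' hω'
      have hdvd : (p : ℤ) ∣ ξ ω := hω
      have hndvd : ¬ (p : ℤ) ∣ ξ ω' := hω'
      have hzq : (ρ (v i) ^ (ξ ω' - ξ ω)) ^ q = 1 := by
        rw [← zpow_natCast, ← zpow_mul, mul_comm, zpow_mul, zpow_natCast, hζq, one_zpow]
      have hz1 : ρ (v i) ^ (ξ ω' - ξ ω) ≠ 1 := by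
        intro hz
        have hu : IsUnit (ρ (v i)) := IsUnit.mk0 _ hζ0
        have huz : hu.unit ^ (ξ ω' - ξ ω) = 1 := by
          apply Units.ext
          rw [Units.val_zpow_eq_zpow_val, IsUnit.unit_spec, hz, Units.val_one]
        have huq : hu.unit ^ q = 1 := by
          apply Units.ext
          rw [Units.val_pow_eq_pow_val, IsUnit.unit_spec, hζq, Units.val_one]
        have hdvd1 : (orderOf hu.unit : ℤ) ∣ (ξ ω' - ξ ω) :=
          orderOf_dvd_iff_zpow_eq_one.mpr huz
        have hdvd2 : orderOf hu.unit ∣ q := orderOf_dvd_of_pow_eq_one huq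
        obtain ⟨j, hj, hjeq⟩ := (Nat.dvd_prime_pow hp).mp (hqdef ▸ hdvd2)
        have hj0 : j ≠ 0 := by
          intro h0
          rw [h0, pow_zero] at hjeq
          have : hu.unit = 1 := orderOf_eq_one_iff.mp hjeq
          apply hne
          rw [← IsUnit.unit_spec hu, this, Units.val_one]
        have hpdvd : (p : ℤ) ∣ (ξ ω' - ξ ω) := by
          refine dvd_trans ?_ hdvd1
          exact_mod_cast Int.natCast_dvd_natCast.mpr (hjeq ▸ dvd_pow_self p hj0)
        apply hndvd
        have : ξ ω' = ξ ω + (ξ ω' - ξ ω) := by ring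
        rw [this]
        exact dvd_add hdvd hpdvd
      have hfactor : ρ (v i) ^ ξ ω - ρ (v i) ^ ξ ω'
          = ρ (v i) ^ ξ ω * (1 - ρ (v i) ^ (ξ ω' - ξ ω)) := by
        rw [mul_sub, mul_one, ← zpow_add₀ hζ0]
        congr 2
        ring
      rw [hfactor, norm_mul, norm_zpow, hζnorm, one_zpow, one_mul]
      exact hdle _ hzq hz1
    have hb := norm_integral_le_of_sep (μ := μ) hfm hfn hA hdpos.le hsep
    rw [hacompl, ← hadef] at hb
    calc ‖∫ ω, ρ (v i) ^ ξ ω ∂μ‖ ≤ 1 - d ^ 2 / 8 * min a (1 - a) := hb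
      _ = B := by rw [hBdef, hKdef]
  -- assemble
  rw [integral_prod_indep (hgm ρ) (hgb ρ) (hgindep ρ) Finset.univ]
  rw [norm_prod]
  rw [← Finset.prod_filter_mul_prod_filter_not Finset.univ (fun i => ρ (v i) ≠ 1)]
  have htriv : (∏ i ∈ Finset.univ.filter (fun i => ¬ ρ (v i) ≠ 1),
      ‖∫ ω, gg ρ i ω ∂μ‖) = 1 := by
    apply Finset.prod_eq_one
    intro i hi
    have h1 : ρ (v i) = 1 := not_not.mp (Finset.mem_filter.mp hi).2
    have h2 : ∀ ω, gg ρ i ω = 1 := fun ω => by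
      rw [hggdef]; simp only [h1, one_zpow]
    simp only [h2]
    simp [measure_univ]
  rw [htriv, mul_one]
  calc (∏ i ∈ Finset.univ.filter (fun i => ρ (v i) ≠ 1), ‖∫ ω, gg ρ i ω ∂μ‖)
      ≤ ∏ _i ∈ Finset.univ.filter (fun i => ρ (v i) ≠ 1), B :=
        Finset.prod_le_prod (fun i _ => norm_nonneg _)
          (fun i hi => hkey i (Finset.mem_filter.mp hi).2)
    _ = B ^ (Finset.univ.filter (fun i => ρ (v i) ≠ 1)).card := Finset.prod_const B
    _ = Real.exp (-(-Real.log B) * (Finset.univ.filter (fun i => ρ (v i) ≠ 1)).card) := by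
        rw [neg_neg, mul_comm, Real.exp_nat_mul, hexp]
end

section
/- Let G be a finite abelian p-group with #G = p^ℓ. For every v ∈ G^n there is a unique 'skeleton', i.e. a unique k ≥ 0, integers 0 ≤ n_1 < ⋯ < n_{k+1} = n, and elements g_1, …, g_k ∈ G such that the subgroups G_i = ⟨g_1,…,g_i⟩ (with G_0 = {0}) are pairwise distinct, v_{n_i+1} = g_i for 1 ≤ i ≤ k, and v_j ∈ G_i for all 0 ≤ i ≤ k and n_i + 1 < j ≤ n_{i+1} (with n_0 = −1). Moreover k ≤ ℓ. -/
open Finset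

/-- The subgroup generated by the first `i` of the elements `g : Fin k → G`. -/
def skeletonSub {G : Type*} [AddCommGroup G] {k : ℕ} (g : Fin k → G) (i : ℕ) :
    AddSubgroup G :=
  AddSubgroup.closure {x | ∃ t : Fin k, (t : ℕ) < i ∧ g t = x}

/-- `s = ⟨k, nf, g⟩` is a skeleton of `v ∈ G^n`: here `nf : Fin (k+2) → ℤ` records
`−1 = n₀ < n₁ < ⋯ < n_{k+1} = n` (so `nf 0 = −1` and `0 ≤ n₁` follows), the
subgroups `Gᵢ = ⟨g₁, …, gᵢ⟩` (`G₀ = {0}`) are pairwise distinct, `v_{nᵢ+1} = gᵢ`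
for `1 ≤ i ≤ k`, and `v_j ∈ Gᵢ` for `nᵢ + 1 < j ≤ n_{i+1}`, `0 ≤ i ≤ k`. The
vector `v` uses 0-based indices: 1-based position `j` is 0-based `j − 1`. -/
def IsSkeleton {G : Type*} [AddCommGroup G] (n : ℕ) (v : Fin n → G)
    (s : Σ k : ℕ, (Fin (k + 2) → ℤ) × (Fin k → G)) : Prop :=
  s.2.1 0 = -1 ∧ StrictMono s.2.1 ∧ s.2.1 (Fin.last (s.1 + 1)) = (n : ℤ) ∧
  Function.Injective (fun i : Fin (s.1 + 1) => skeletonSub s.2.2 (i : ℕ)) ∧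
  (∀ i : Fin s.1, ∀ j : Fin n, (j : ℤ) = s.2.1 i.succ.castSucc → v j = s.2.2 i) ∧
  (∀ i : Fin (s.1 + 1), ∀ j : Fin n,
    s.2.1 i.castSucc < (j : ℤ) → (j : ℤ) < s.2.1 i.succ →
      v j ∈ skeletonSub s.2.2 (i : ℕ))

section Aux

variable {G : Type*} [AddCommGroup G] {n : ℕ}

lemma skeletonSub_mono {k : ℕ} (g : Fin k → G) : Monotone (skeletonSub g) := by
  intro i j hij
  apply AddSubgroup.closure_mono
  rintro x ⟨t, ht, rfl⟩
  exact ⟨t, lt_of_lt_of_le ht hij, rfl⟩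

lemma mem_skeletonSub {k : ℕ} (g : Fin k → G) {t : Fin k} {m : ℕ} (h : (t : ℕ) < m) :
    g t ∈ skeletonSub g m :=
  AddSubgroup.subset_closure ⟨t, h, rfl⟩

lemma skeletonSub_succ_le {k : ℕ} (g : Fin k → G) (t : Fin k)
    (h : g t ∈ skeletonSub g (t : ℕ)) :
    skeletonSub g ((t : ℕ) + 1) ≤ skeletonSub g (t : ℕ) := by
  rw [skeletonSub, AddSubgroup.closure_le]
  rintro x ⟨s, hs, rfl⟩
  rcases Nat.lt_succ_iff_lt_or_eq.mp hs with h' | h'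
  · exact mem_skeletonSub g h'
  · have hst : s = t := Fin.ext h'
    subst hst
    exact h

lemma skeletonSub_lt {k' : ℕ} (g' : Fin k' → G)
    (hinj : Function.Injective (fun i : Fin (k' + 1) => skeletonSub g' (i : ℕ)))
    {m : ℕ} (hm : m < k') : skeletonSub g' m < skeletonSub g' (m + 1) := by
  refine lt_of_le_of_ne (skeletonSub_mono g' (Nat.le_succ m)) ?_
  intro h
  have h2 : (⟨m, by omega⟩ : Fin (k' + 1)) = ⟨m + 1, by omega⟩ := hinj h
  simp [Fin.ext_iff] at h2

lemma not_mem_skeletonSub {k' : ℕ} (g' : Fin k' → G)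
    (hinj : Function.Injective (fun i : Fin (k' + 1) => skeletonSub g' (i : ℕ)))
    (t : Fin k') : g' t ∉ skeletonSub g' (t : ℕ) := by
  intro h
  exact (not_le_of_gt (skeletonSub_lt g' hinj t.2)) (skeletonSub_succ_le g' t h)

lemma card_lt_card_of_lt [Fintype G] {H K : AddSubgroup G} (h : H < K) :
    Nat.card H < Nat.card K := by
  have h2 : (H : Set G) ⊂ K := by exact_mod_cast h
  have := Set.ncard_lt_ncard h2 (Set.toFinite _)
  rw [← Nat.card_coe_set_eq, ← Nat.card_coe_set_eq] at this
  exact this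

lemma skeleton_card_le (p ℓ : ℕ) (hp : p.Prime) [Fintype G]
    (hcard : Fintype.card G = p ^ ℓ) {k' : ℕ} (g' : Fin k' → G)
    (hinj : Function.Injective (fun i : Fin (k' + 1) => skeletonSub g' (i : ℕ))) :
    k' ≤ ℓ := by
  have hdvd : ∀ m : ℕ, Nat.card (skeletonSub g' m) ∣ p ^ ℓ := by
    intro m
    have h := AddSubgroup.card_addSubgroup_dvd_card (skeletonSub g' m)
    have h2 : Nat.card G = p ^ ℓ := by rw [Nat.card_eq_fintype_card, hcard]
    rwa [h2] at h
  have key : ∀ m : ℕ, m ≤ k' → p ^ m ≤ Nat.card (skeletonSub g' m) := by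
    intro m
    induction m with
    | zero =>
      intro _
      have h := Nat.card_pos (α := skeletonSub g' 0)
      simp only [pow_zero]
      omega
    | succ m ih =>
      intro hm
      have h1 := ih (by omega)
      have hltc : Nat.card (skeletonSub g' m) < Nat.card (skeletonSub g' (m + 1)) :=
        card_lt_card_of_lt (skeletonSub_lt g' hinj (by omega))
      obtain ⟨a, _, hae⟩ := (Nat.dvd_prime_pow hp).mp (hdvd m)
      obtain ⟨b, _, hbe⟩ := (Nat.dvd_prime_pow hp).mp (hdvd (m + 1))
      rw [hae] at h1 hltc
      rw [hbe] at hltc ⊢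
      have hab : a < b := (Nat.pow_lt_pow_iff_right hp.one_lt).mp hltc
      have hma : m ≤ a := (Nat.pow_le_pow_iff_right hp.one_lt).mp h1
      exact Nat.pow_le_pow_right hp.pos (by omega)
  have h2 : p ^ k' ≤ p ^ ℓ :=
    le_trans (key k' le_rfl) (Nat.le_of_dvd (pow_pos hp.pos ℓ) (hdvd k'))
  exact (Nat.pow_le_pow_iff_right hp.one_lt).mp h2

/-- The subgroup generated by the entries of `v` in positions `< b`. -/
def prefixSub (v : Fin n → G) (b : ℕ) : AddSubgroup G :=
  AddSubgroup.closure {x | ∃ t : Fin n, (t : ℕ) < b ∧ v t = x}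

open scoped Classical in
/-- The set of "breakpoints" of `v`. -/
noncomputable def bset (v : Fin n → G) : Finset (Fin n) :=
  Finset.univ.filter (fun j => v j ∉ prefixSub v (j : ℕ))

lemma mem_bset {v : Fin n → G} {j : Fin n} :
    j ∈ bset v ↔ v j ∉ prefixSub v (j : ℕ) := by
  classical
  simp [bset]

variable (v : Fin n → G)

/-- The increasing enumeration of the breakpoints. -/
noncomputable def eC : Fin (bset v).card ↪o Fin n := (bset v).orderEmbOfFin rfl

/-- The canonical generators. -/
noncomputable def gC : Fin (bset v).card → G := fun i => v (eC v i)

/-- The canonical index sequence. -/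
noncomputable def nfC : Fin ((bset v).card + 2) → ℤ := fun i =>
  if h : 0 < (i : ℕ) ∧ (i : ℕ) < (bset v).card + 1 then
    (((eC v ⟨(i : ℕ) - 1, by omega⟩ : Fin n) : ℕ) : ℤ)
  else if (i : ℕ) = 0 then -1 else (n : ℤ)

/-- The canonical skeleton. -/
noncomputable def canonSkel : Σ k : ℕ, (Fin (k + 2) → ℤ) × (Fin k → G) :=
  ⟨(bset v).card, nfC v, gC v⟩

lemma nfC_zero : nfC v 0 = -1 := by simp [nfC]

lemma nfC_last : nfC v (Fin.last ((bset v).card + 1)) = (n : ℤ) := by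
  have h1 : ((Fin.last ((bset v).card + 1)) : ℕ) = (bset v).card + 1 := rfl
  simp [nfC, h1]

lemma nfC_mid (i : Fin (bset v).card) :
    nfC v i.succ.castSucc = (((eC v i : Fin n) : ℕ) : ℤ) := by
  have hv : ((i.succ.castSucc : Fin ((bset v).card + 2)) : ℕ) = (i : ℕ) + 1 := rfl
  simp only [nfC, hv]
  rw [dif_pos ⟨Nat.succ_pos _, Nat.succ_lt_succ i.2⟩]
  have he : (⟨(i : ℕ) + 1 - 1, by omega⟩ : Fin (bset v).card) = i := Fin.ext (by simp)
  rw [he]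

lemma nfC_strictMono : StrictMono (nfC v) := by
  intro i j hij
  have hij' : (i : ℕ) < (j : ℕ) := hij
  have hjb : (j : ℕ) < (bset v).card + 2 := j.2
  simp only [nfC]
  split_ifs with h1 h2 h2 h3 h3 h4 h3 h4
  · -- both interior
    have hlt : (⟨(i : ℕ) - 1, by omega⟩ : Fin (bset v).card) < ⟨(j : ℕ) - 1, by omega⟩ := by
      simp only [Fin.mk_lt_mk]; omega
    have := (eC v).strictMono hlt
    have : ((eC v ⟨(i : ℕ) - 1, by omega⟩ : Fin n) : ℕ) <
        ((eC v ⟨(j : ℕ) - 1, by omega⟩ : Fin n) : ℕ) := this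
    omega
  · omega
  · -- i interior, j = last
    have := (eC v ⟨(i : ℕ) - 1, by omega⟩ : Fin n).2
    omega
  · omega
  · -- i = 0, j interior
    omega
  · omega
  · omega
  · omega
  · omega

lemma prefix_le_skeletonSub_canon : ∀ b m : ℕ, m ≤ (bset v).card →
    (∀ s : Fin (bset v).card, m ≤ (s : ℕ) → b ≤ ((eC v s : Fin n) : ℕ)) →
    prefixSub v b ≤ skeletonSub (gC v) m := by
  intro b
  induction b using Nat.strong_induction_on with
  | _ b ih =>
    intro m hm hbd
    rw [prefixSub, AddSubgroup.closure_le]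
    rintro x ⟨t, htb, rfl⟩
    by_cases hB : t ∈ bset v
    · have hrange : t ∈ Set.range (eC v) := by
        rw [eC, Finset.range_orderEmbOfFin]
        exact hB
      obtain ⟨s, rfl⟩ := hrange
      have hsm : (s : ℕ) < m := by
        by_contra h
        push_neg at h
        have := hbd s h
        omega
      exact mem_skeletonSub (gC v) hsm
    · have hmem : v t ∈ prefixSub v (t : ℕ) := by rwa [mem_bset, not_not] at hB
      exact ih (t : ℕ) htb m hm
        (fun s hs => le_of_lt (lt_of_lt_of_le htb (hbd s hs))) hmem

theorem isSkeleton_canon : IsSkeleton n v (canonSkel v) := by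
  rw [IsSkeleton]
  simp only [canonSkel]
  refine ⟨nfC_zero v, nfC_strictMono v, nfC_last v, ?_, ?_, ?_⟩
  · -- injectivity
    have hsm : StrictMono (fun i : Fin ((bset v).card + 1) => skeletonSub (gC v) (i : ℕ)) := by
      rw [Fin.strictMono_iff_lt_succ]
      intro i
      have hik : (i : ℕ) < (bset v).card := i.2
      have hv1 : ((i.castSucc : Fin ((bset v).card + 1)) : ℕ) = (i : ℕ) := rfl
      have hv2 : ((i.succ : Fin ((bset v).card + 1)) : ℕ) = (i : ℕ) + 1 := rfl
      simp only [hv1, hv2]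
      refine lt_of_le_of_ne (skeletonSub_mono _ (Nat.le_succ _)) ?_
      intro heq
      set i' : Fin (bset v).card := ⟨(i : ℕ), hik⟩ with hi'
      have hgen : gC v i' ∈ skeletonSub (gC v) (i : ℕ) := by
        rw [heq]
        exact mem_skeletonSub (gC v) (show (i' : ℕ) < (i : ℕ) + 1 from Nat.lt_succ_self _)
      have hle : skeletonSub (gC v) (i : ℕ) ≤ prefixSub v ((eC v i' : Fin n) : ℕ) := by
        rw [skeletonSub, AddSubgroup.closure_le]
        rintro x ⟨t, ht, rfl⟩
        refine AddSubgroup.subset_closure ⟨eC v t, ?_, rfl⟩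
        exact (eC v).strictMono (show t < i' from ht)
      have hBmem : (eC v i' : Fin n) ∈ bset v := Finset.orderEmbOfFin_mem _ _ _
      rw [mem_bset] at hBmem
      exact hBmem (hle hgen)
    exact hsm.injective
  · -- generators
    intro i j hj
    rw [nfC_mid] at hj
    have hj' : j = eC v i := Fin.ext (by omega)
    rw [hj']
    rfl
  · -- membership
    intro i j h1 h2
    have hik1 : (i : ℕ) ≤ (bset v).card := Nat.lt_succ_iff.mp i.2
    refine prefix_le_skeletonSub_canon v ((j : ℕ) + 1) (i : ℕ) hik1 ?_ ?_
    · intro s hs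
      by_cases hik : (i : ℕ) < (bset v).card
      · set i' : Fin (bset v).card := ⟨(i : ℕ), hik⟩ with hi'
        have hsucc : i.succ = i'.succ.castSucc := Fin.ext rfl
        rw [hsucc, nfC_mid] at h2
        have h4 : ((eC v i' : Fin n) : ℕ) ≤ ((eC v s : Fin n) : ℕ) :=
          (eC v).monotone (show i' ≤ s from hs)
        omega
      · exact absurd (lt_of_le_of_lt hs s.2) (by omega)
    · exact AddSubgroup.subset_closure ⟨j, Nat.lt_succ_self _, rfl⟩

theorem skeleton_eq_canon (s : Σ k : ℕ, (Fin (k + 2) → ℤ) × (Fin k → G))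
    (hs : IsSkeleton n v s) : s = canonSkel v := by
  obtain ⟨k', nf', g'⟩ := s
  obtain ⟨h0, hm, hl, hinj, hgen, hmem⟩ := hs
  dsimp only at h0 hm hl hinj hgen hmem
  -- positions of the generators
  have hpos : ∀ i : Fin k', 0 ≤ nf' i.succ.castSucc ∧ nf' i.succ.castSucc < (n : ℤ) := by
    intro i
    constructor
    · have := hm (show (0 : Fin (k' + 2)) < i.succ.castSucc from by
        rw [Fin.lt_def]; simp)
      rw [h0] at this
      omega
    · have := hm (show i.succ.castSucc < Fin.last (k' + 1) from by
        rw [Fin.lt_def]; simp only [Fin.coe_castSucc, Fin.val_succ, Fin.val_last]; exact Nat.succ_lt_succ i.2)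
      rwa [hl] at this
  set f : Fin k' → Fin n := fun i => ⟨(nf' i.succ.castSucc).toNat, by
    have := hpos i; omega⟩ with hfdef
  have hfv : ∀ i, ((f i : Fin n) : ℤ) = nf' i.succ.castSucc := by
    intro i
    have := hpos i
    show (((nf' i.succ.castSucc).toNat : ℕ) : ℤ) = nf' i.succ.castSucc
    omega
  have hfmono : StrictMono f := by
    intro a b hab
    have hlt : nf' a.succ.castSucc < nf' b.succ.castSucc := by
      apply hm
      rw [Fin.lt_def]
      simpa using hab
    have ha := hpos a
    have hb := hpos b
    rw [Fin.lt_def]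
    show (nf' a.succ.castSucc).toNat < (nf' b.succ.castSucc).toNat
    omega
  have hvf : ∀ i, v (f i) = g' i := fun i => hgen i (f i) (hfv i)
  -- locating an index
  have hloc : ∀ j : Fin n, ∃ i : Fin (k' + 1),
      nf' i.castSucc < (j : ℤ) ∧ (j : ℤ) ≤ nf' i.succ := by
    intro j
    classical
    set S := Finset.univ.filter (fun i : Fin (k' + 1) => nf' i.castSucc < (j : ℤ)) with hS
    have h0S : (0 : Fin (k' + 1)) ∈ S := by
      simp only [hS, Finset.mem_filter, Finset.mem_univ, true_and]
      rw [show ((0 : Fin (k' + 1)).castSucc) = 0 from rfl, h0]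
      omega
    set i := S.max' ⟨0, h0S⟩ with hi
    have hiS : i ∈ S := S.max'_mem _
    rw [hS, Finset.mem_filter] at hiS
    refine ⟨i, hiS.2, ?_⟩
    by_cases hik : (i : ℕ) < k'
    · set i' : Fin (k' + 1) := ⟨(i : ℕ) + 1, by omega⟩ with hi'
      have hi'S : i' ∉ S := by
        intro h
        have hle := S.le_max' i' h
        rw [← hi, Fin.le_def] at hle
        have hv : (i' : ℕ) = (i : ℕ) + 1 := rfl
        omega
      rw [hS, Finset.mem_filter] at hi'S
      push_neg at hi'S
      have := hi'S (Finset.mem_univ _)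
      have hcast : i'.castSucc = i.succ := Fin.ext rfl
      rwa [hcast] at this
    · have hik' : (i : ℕ) = k' := by have := i.2; omega
      have hlast : i.succ = Fin.last (k' + 1) := Fin.ext (by simp [hik'])
      rw [hlast, hl]
      have := j.2
      omega
  -- lemma A : prefix subgroups are inside skeleton subgroups
  have hA : ∀ b m : ℕ, m ≤ k' →
      (∀ t : Fin k', m ≤ (t : ℕ) → (b : ℤ) ≤ nf' t.succ.castSucc) →
      prefixSub v b ≤ skeletonSub g' m := by
    intro b m hmk hbd
    rw [prefixSub, AddSubgroup.closure_le]
    rintro x ⟨t, htb, rfl⟩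
    by_cases hbp : ∃ s : Fin k', (t : ℤ) = nf' s.succ.castSucc
    · obtain ⟨s, hts⟩ := hbp
      have hsm : (s : ℕ) < m := by
        by_contra h
        push_neg at h
        have := hbd s h
        omega
      rw [hgen s t hts]
      exact mem_skeletonSub g' hsm
    · push_neg at hbp
      obtain ⟨i, hi1, hi2⟩ := hloc t
      have hi2' : (t : ℤ) < nf' i.succ := by
        rcases lt_or_eq_of_le hi2 with h | h
        · exact h
        · exfalso
          by_cases hik : (i : ℕ) < k'
          · refine hbp ⟨(i : ℕ), hik⟩ ?_
            rw [h]
            congr 1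
          · have hik' : (i : ℕ) = k' := by have := i.2; omega
            have hlast : i.succ = Fin.last (k' + 1) := Fin.ext (by simp [hik'])
            rw [hlast, hl] at h
            have := t.2
            omega
      have hmem' := hmem i t hi1 hi2'
      by_cases him : (i : ℕ) ≤ m
      · exact skeletonSub_mono g' him hmem'
      · exfalso
        push_neg at him
        have hmk' : m < k' := by have := i.2; omega
        have hb1 := hbd ⟨m, hmk'⟩ le_rfl
        have h5 : nf' (⟨m, hmk'⟩ : Fin k').succ.castSucc ≤ nf' i.castSucc := by
          apply hm.monotone
          rw [Fin.le_def]
          simp only [Fin.coe_castSucc, Fin.val_succ]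
          omega
        omega
  -- lemma B : skeleton subgroups are inside prefix subgroups
  have hB : ∀ b m : ℕ, (∀ t : Fin k', (t : ℕ) < m → ((f t : Fin n) : ℕ) < b) →
      skeletonSub g' m ≤ prefixSub v b := by
    intro b m h
    rw [skeletonSub, AddSubgroup.closure_le]
    rintro x ⟨t, htm, rfl⟩
    exact AddSubgroup.subset_closure ⟨f t, h t htm, hvf t⟩
  -- every f i is a breakpoint
  have hfB : ∀ i : Fin k', f i ∈ bset v := by
    intro i
    rw [mem_bset]
    intro hmem'
    have hle := hA ((f i : Fin n) : ℕ) (i : ℕ) (le_of_lt i.2) (fun t ht => by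
      have h6 : f i ≤ f t := hfmono.monotone (show i ≤ t from ht)
      rw [Fin.le_def] at h6
      have := hfv t
      omega)
    have h7 := hle hmem'
    rw [hvf i] at h7
    exact not_mem_skeletonSub g' hinj i h7
  -- every breakpoint is some f i
  have hBf : ∀ j : Fin n, j ∈ bset v → ∃ i : Fin k', f i = j := by
    intro j hj
    by_contra hno
    push_neg at hno
    obtain ⟨i, hi1, hi2⟩ := hloc j
    have hi2' : (j : ℤ) < nf' i.succ := by
      rcases lt_or_eq_of_le hi2 with h | h
      · exact h
      · exfalso
        by_cases hik : (i : ℕ) < k'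
        · set i' : Fin k' := ⟨(i : ℕ), hik⟩ with hi'
          have hsucc : i.succ = i'.succ.castSucc := Fin.ext rfl
          rw [hsucc] at h
          have h9 := hfv i'
          exact hno i' (Fin.ext (by omega))
        · have hik' : (i : ℕ) = k' := by have := i.2; omega
          have hlast : i.succ = Fin.last (k' + 1) := Fin.ext (by simp [hik'])
          rw [hlast, hl] at h
          have := j.2
          omega
    have hmemj := hmem i j hi1 hi2'
    have h8 := hB (j : ℕ) (i : ℕ) (fun t ht => by
      have h5 : nf' t.succ.castSucc ≤ nf' i.castSucc := by
        apply hm.monotone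
        rw [Fin.le_def]
        simp only [Fin.coe_castSucc, Fin.val_succ]
        omega
      have := hfv t
      omega) hmemj
    rw [mem_bset] at hj
    exact hj h8
  -- conclude the cardinality
  classical
  have hcard : (bset v).card = k' := by
    have himg : Finset.image f Finset.univ = bset v := by
      ext j
      simp only [Finset.mem_image, Finset.mem_univ, true_and]
      exact ⟨fun ⟨i, hi⟩ => hi ▸ hfB i, hBf j⟩
    calc (bset v).card = (Finset.image f Finset.univ).card := by rw [himg]
      _ = (Finset.univ : Finset (Fin k')).card :=
          Finset.card_image_of_injective _ hfmono.injective
      _ = k' := by simp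
  subst hcard
  -- identify f with the canonical enumeration
  have hfe' : ∀ i, f i = eC v i := by
    intro i
    have h := congrFun (Finset.orderEmbOfFin_unique (s := bset v) (h := rfl) (f := f)
      hfB hfmono) i
    exact h
  -- final equality
  show (⟨(bset v).card, nf', g'⟩ : Σ k : ℕ, (Fin (k + 2) → ℤ) × (Fin k → G)) = ⟨(bset v).card, nfC v, gC v⟩
  have hg : g' = gC v := by
    funext i
    rw [← hvf i, hfe' i]
    rfl
  have hnf : nf' = nfC v := by
    funext i
    by_cases h0' : (i : ℕ) = 0
    · have : i = 0 := Fin.ext h0'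
      rw [this, h0, nfC_zero]
    · by_cases hl' : (i : ℕ) = (bset v).card + 1
      · have : i = Fin.last ((bset v).card + 1) := Fin.ext (by simpa using hl')
        rw [this, hl, nfC_last]
      · have hib : (i : ℕ) < (bset v).card + 2 := i.2
        set t : Fin (bset v).card := ⟨(i : ℕ) - 1, by omega⟩ with ht
        have hit : i = t.succ.castSucc := Fin.ext (by
          simp only [Fin.coe_castSucc, Fin.val_succ, ht]
          omega)
        rw [hit, nfC_mid, ← hfe' t, ← hfv t]
  rw [hg, hnf]

end Aux

/-- Let `G` be a finite abelian `p`-group with `#G = p^ℓ`. Every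
`v ∈ G^n` has a unique skeleton, and its length `k` satisfies `k ≤ ℓ`. -/
theorem stmt6 (p ℓ : ℕ) (hp : p.Prime)
    (G : Type*) [AddCommGroup G] [Fintype G] (hcard : Fintype.card G = p ^ ℓ)
    (n : ℕ) (v : Fin n → G) :
    (∃! s : Σ k : ℕ, (Fin (k + 2) → ℤ) × (Fin k → G), IsSkeleton n v s) ∧
    (∀ s : Σ k : ℕ, (Fin (k + 2) → ℤ) × (Fin k → G), IsSkeleton n v s → s.1 ≤ ℓ) := by
  constructor
  · exact ⟨canonSkel v, isSkeleton_canon v, fun s hs => skeleton_eq_canon v s hs⟩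
  · intro s hs
    exact skeleton_card_le p ℓ hp hcard s.2.2 hs.2.2.2.1
end

section
/- Let p be a prime and ℓ, n positive integers. The number of tuples of integers 0 ≤ n_1 < n_2 < ⋯ < n_{ℓ+1} = n satisfying n_{i+1} − n_i > 3 log² n for all i = 1, …, ℓ is asymptotically n^ℓ/ℓ! as n → ∞; i.e., the ratio of this count to n^ℓ/ℓ! tends to 1. -/
open Filter Finset


def S17 (ℓ n : ℕ) : Set (Fin (ℓ + 1) → ℕ) :=
  {t | StrictMono t ∧ t (Fin.last ℓ) = n ∧
    ∀ i : Fin ℓ, ((t i.succ : ℝ) - (t i.castSucc : ℝ)) > 3 * (Real.log n) ^ 2}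

lemma S17_finite (ℓ n : ℕ) : (S17 ℓ n).Finite := by
  apply Set.Finite.subset (Set.Finite.pi (fun _ : Fin (ℓ+1) => Set.finite_Iic n))
  intro t ht
  simp only [Set.mem_pi, Set.mem_univ, Set.mem_Iic, forall_true_left]
  intro i
  calc t i ≤ t (Fin.last ℓ) := ht.1.monotone (Fin.le_last i)
    _ = n := ht.2.1

noncomputable instance (ℓ n : ℕ) : Fintype (S17 ℓ n) := (S17_finite ℓ n).fintype

lemma S17_upper (ℓ n : ℕ) : Nat.card (S17 ℓ n) ≤ Nat.choose n ℓ := by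
  have key : ∀ t ∈ S17 ℓ n,
      (Finset.image (fun i : Fin ℓ => t i.castSucc) Finset.univ) ∈
        (Finset.range n).powersetCard ℓ := by
    intro t ht
    rw [Finset.mem_powersetCard]
    constructor
    · intro x hx
      simp only [Finset.mem_image, Finset.mem_univ, true_and] at hx
      obtain ⟨i, rfl⟩ := hx
      rw [Finset.mem_range]
      calc t i.castSucc < t (Fin.last ℓ) := ht.1 (Fin.castSucc_lt_last i)
        _ = n := ht.2.1
    · have hinj : Function.Injective (fun i : Fin ℓ => t i.castSucc) :=
        fun a b hab => Fin.castSucc_injective _ (ht.1.injective hab)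
      rw [Finset.card_image_of_injective _ hinj, Finset.card_univ, Fintype.card_fin]
  have : Nat.card (S17 ℓ n) ≤ Nat.card ((Finset.range n).powersetCard ℓ : Finset (Finset ℕ)) := by
    apply Nat.card_le_card_of_injective
      (fun x : S17 ℓ n => (⟨Finset.image (fun i : Fin ℓ => x.1 i.castSucc) Finset.univ,
        key x.1 x.2⟩ : ((Finset.range n).powersetCard ℓ : Finset (Finset ℕ))))
    rintro ⟨t, ht⟩ ⟨t', ht'⟩ h
    simp only [Subtype.mk.injEq] at h ⊢
    set s := Finset.image (fun i : Fin ℓ => t i.castSucc) Finset.univ with hs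
    have hcard : s.card = ℓ := (Finset.mem_powersetCard.1 (key t ht)).2
    have h1 : (fun i : Fin ℓ => t i.castSucc) = s.orderEmbOfFin hcard :=
      Finset.orderEmbOfFin_unique hcard
        (fun x => Finset.mem_image_of_mem _ (Finset.mem_univ x))
        (ht.1.comp Fin.strictMono_castSucc)
    have h2 : (fun i : Fin ℓ => t' i.castSucc) = s.orderEmbOfFin hcard :=
      Finset.orderEmbOfFin_unique hcard
        (fun x => h ▸ Finset.mem_image_of_mem _ (Finset.mem_univ x))
        (ht'.1.comp Fin.strictMono_castSucc)
    funext i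
    refine Fin.lastCases ?_ ?_ i
    · rw [ht.2.1, ht'.2.1]
    · intro j
      have := congrFun (h1.trans h2.symm) j
      exact this
  calc Nat.card (S17 ℓ n) ≤ _ := this
    _ = ((Finset.range n).powersetCard ℓ).card := Nat.card_eq_finsetCard _
    _ = Nat.choose n ℓ := by rw [Finset.card_powersetCard, Finset.card_range]

noncomputable def G17 (n : ℕ) : ℕ := ⌊3 * (Real.log n) ^ 2⌋₊ + 1

lemma G17_gt (n : ℕ) : 3 * (Real.log n) ^ 2 < (G17 n : ℕ) := by
  have := Nat.lt_floor_add_one (3 * (Real.log n) ^ 2)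
  simpa [G17] using this

lemma G17_pos (n : ℕ) : 0 < G17 n := Nat.succ_pos _

lemma S17_lower (ℓ : ℕ) (hℓ : 0 < ℓ) (n : ℕ) :
    Nat.choose (n - ℓ * G17 n) ℓ ≤ Nat.card (S17 ℓ n) := by
  set m := n - ℓ * G17 n with hm
  rcases lt_or_ge m ℓ with h | hmℓ
  · rw [Nat.choose_eq_zero_of_lt h]; exact Nat.zero_le _
  -- now ℓ ≤ m, hence ℓ * G17 n ≤ n and m + ℓ * G17 n = n
  have hGn : ℓ * G17 n ≤ n := by
    by_contra hc
    push_neg at hc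
    have : m = 0 := Nat.sub_eq_zero_of_le hc.le
    omega
  have hsum : m + ℓ * G17 n = n := by omega
  haveI : Finite (S17 ℓ n) := S17_finite ℓ n
  set G := G17 n with hG
  -- the injection
  have key : ∀ s : ((Finset.range m).powersetCard ℓ : Finset (Finset ℕ)),
      (fun i : Fin (ℓ + 1) =>
        if h : (i : ℕ) < ℓ then
          (s.1.orderEmbOfFin (Finset.mem_powersetCard.1 s.2).2) ⟨i, h⟩ + (i : ℕ) * G
        else n) ∈ S17 ℓ n := by
    rintro ⟨s, hs⟩
    obtain ⟨hsub, hcard⟩ := Finset.mem_powersetCard.1 hs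
    set e := s.orderEmbOfFin hcard with he
    have hem : ∀ j : Fin ℓ, e j < m := by
      intro j
      have : e j ∈ s := Finset.orderEmbOfFin_mem s hcard j
      exact Finset.mem_range.1 (hsub this)
    -- value plus next offset bound
    have hbound : ∀ j : Fin ℓ, e j + (j : ℕ) * G + G < n := by
      intro j
      have h1 : e j < m := hem j
      have h2 : (j : ℕ) + 1 ≤ ℓ := j.2
      calc e j + (j : ℕ) * G + G = e j + ((j : ℕ) + 1) * G := by ring
        _ < m + ((j : ℕ) + 1) * G := by omega
        _ ≤ m + ℓ * G := by
            have : ((j : ℕ) + 1) * G ≤ ℓ * G := Nat.mul_le_mul_right _ h2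
            omega
        _ = n := hsum
    refine ⟨?_, ?_, ?_⟩
    · -- StrictMono
      intro i j hij
      by_cases hj : (j : ℕ) < ℓ
      · have hi : (i : ℕ) < ℓ := lt_trans hij hj
        simp only [hi, hj, dif_pos]
        have h1 : e ⟨i, hi⟩ < e ⟨j, hj⟩ := e.strictMono (by exact hij)
        have h2 : (i : ℕ) * G ≤ (j : ℕ) * G := Nat.mul_le_mul_right _ (le_of_lt hij)
        omega
      · by_cases hi : (i : ℕ) < ℓ
        · simp only [hi, hj, dif_pos, dif_neg, not_false_iff]
          have := hbound ⟨i, hi⟩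
          simp only at this
          omega
        · exfalso
          have : (i : ℕ) < (j : ℕ) := hij
          omega
    · simp [Fin.last]
    · intro i
      have hi : ((i.castSucc : Fin (ℓ+1)) : ℕ) < ℓ := by simp [i.2]
      have hG3 : 3 * (Real.log n) ^ 2 < (G : ℝ) := G17_gt n
      simp only [hi, dif_pos]
      by_cases hsucc : ((i.succ : Fin (ℓ+1)) : ℕ) < ℓ
      · simp only [hsucc, dif_pos]
        have hmono : e ⟨(i.castSucc : Fin (ℓ+1)), hi⟩ < e ⟨(i.succ : Fin (ℓ+1)), hsucc⟩ := by
          apply e.strictMono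
          simp [Fin.lt_def]
        have hval : ((i.succ : Fin (ℓ+1)) : ℕ) = ((i.castSucc : Fin (ℓ+1)) : ℕ) + 1 := by simp
        have hmul : ((i.succ : Fin (ℓ+1)) : ℕ) * G
            = ((i.castSucc : Fin (ℓ+1)) : ℕ) * G + G := by rw [hval]; ring
        have hge : e ⟨(i.castSucc : Fin (ℓ+1)), hi⟩ + ((i.castSucc : Fin (ℓ+1)) : ℕ) * G + G ≤
            e ⟨(i.succ : Fin (ℓ+1)), hsucc⟩ + ((i.succ : Fin (ℓ+1)) : ℕ) * G := by
          omega
        have hcast := (Nat.cast_le (α := ℝ)).2 hge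
        push_cast at hcast ⊢
        linarith
      · simp only [hsucc, dif_neg, not_false_iff]
        have hb := hbound ⟨(i.castSucc : Fin (ℓ+1)), hi⟩
        simp only at hb
        have hge : e ⟨(i.castSucc : Fin (ℓ+1)), hi⟩ + ((i.castSucc : Fin (ℓ+1)) : ℕ) * G + G ≤ n := le_of_lt hb
        have hcast := (Nat.cast_le (α := ℝ)).2 hge
        push_cast at hcast ⊢
        linarith
  have inj : Function.Injective
      (fun s : ((Finset.range m).powersetCard ℓ : Finset (Finset ℕ)) =>
        (⟨fun i : Fin (ℓ + 1) =>
          if h : (i : ℕ) < ℓ then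
            (s.1.orderEmbOfFin (Finset.mem_powersetCard.1 s.2).2) ⟨i, h⟩ + (i : ℕ) * G
          else n, key s⟩ : S17 ℓ n)) := by
    rintro ⟨s, hs⟩ ⟨s', hs'⟩ h
    simp only [Subtype.mk.injEq] at h ⊢
    have hcs := (Finset.mem_powersetCard.1 hs).2
    have hcs' := (Finset.mem_powersetCard.1 hs').2
    have hpt : ∀ j : Fin ℓ, s.orderEmbOfFin hcs j = s'.orderEmbOfFin hcs' j := by
      intro j
      have hj : ((j.castSucc : Fin (ℓ+1)) : ℕ) < ℓ := by simp [j.2]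
      have hval := congrFun h j.castSucc
      simp only [hj, dif_pos] at hval
      have hjj : (⟨((j.castSucc : Fin (ℓ+1)) : ℕ), hj⟩ : Fin ℓ) = j := by
        ext; simp
      rw [hjj] at hval
      omega
    have hfun : ⇑(s.orderEmbOfFin hcs) = ⇑(s'.orderEmbOfFin hcs') := funext hpt
    apply Finset.coe_injective
    calc (s : Set ℕ) = Set.range (s.orderEmbOfFin hcs) := (Finset.range_orderEmbOfFin s hcs).symm
      _ = Set.range (s'.orderEmbOfFin hcs') := by rw [hfun]
      _ = (s' : Set ℕ) := Finset.range_orderEmbOfFin s' hcs'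
  calc Nat.choose m ℓ = ((Finset.range m).powersetCard ℓ).card := by
        rw [Finset.card_powersetCard, Finset.card_range]
    _ = Nat.card ((Finset.range m).powersetCard ℓ : Finset (Finset ℕ)) :=
        (Nat.card_eq_finsetCard _).symm
    _ ≤ Nat.card (S17 ℓ n) := Nat.card_le_card_of_injective _ inj

lemma desc_tendsto (ℓ : ℕ) (c : ℕ → ℕ)
    (hc : Tendsto (fun n : ℕ => (c n : ℝ) / n) atTop (nhds 0)) :
    Tendsto (fun n : ℕ => ((n - c n).descFactorial ℓ : ℝ) / (n : ℝ) ^ ℓ) atTop (nhds 1) := by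
  have hev : ∀ᶠ n : ℕ in atTop, c n + ℓ < n := by
    have h2 : ∀ᶠ n : ℕ in atTop, (c n : ℝ) / n < 1/2 :=
      hc.eventually_lt_const (by norm_num)
    filter_upwards [h2, eventually_gt_atTop (2 * ℓ + 1)] with n hn hn'
    have hn0 : (0:ℝ) < n := by exact_mod_cast (by omega : 0 < n)
    rw [div_lt_iff₀ hn0] at hn
    have : (c n : ℝ) + ℓ < n := by
      have hℓn : (2 * ℓ + 2 : ℝ) ≤ n := by exact_mod_cast hn'
      nlinarith
    exact_mod_cast this
  have heq : ∀ᶠ n : ℕ in atTop,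
      ((n - c n).descFactorial ℓ : ℝ) / (n : ℝ) ^ ℓ
        = ∏ i ∈ Finset.range ℓ, (1 - ((c n : ℝ) + i) / n) := by
    filter_upwards [hev, eventually_gt_atTop 0] with n hn hn0
    have hn0' : (0:ℝ) < n := by positivity
    rw [Nat.descFactorial_eq_prod_range, Nat.cast_prod]
    rw [show ((n:ℝ))^ℓ = ∏ _i ∈ Finset.range ℓ, (n:ℝ) by
      rw [Finset.prod_const, Finset.card_range]]
    rw [← Finset.prod_div_distrib]
    apply Finset.prod_congr rfl
    intro i hi
    have hiℓ : i < ℓ := Finset.mem_range.1 hi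
    have h1 : c n + i ≤ n := by omega
    have h2 : i ≤ n - c n := by omega
    rw [Nat.cast_sub h2, Nat.cast_sub (by omega : c n ≤ n)]
    field_simp
    ring
  refine Tendsto.congr' (EventuallyEq.symm heq) ?_
  have hprod := tendsto_finset_prod (f := fun (i : ℕ) (n : ℕ) => (1 : ℝ) - ((c n : ℝ) + i) / n)
    (a := fun _ => (1:ℝ)) (Finset.range ℓ) (by
    intro i _
    have h1 : Tendsto (fun n : ℕ => ((c n : ℝ) + i) / n) atTop (nhds 0) := by
      have h2 : Tendsto (fun n : ℕ => (i : ℝ) / n) atTop (nhds 0) :=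
        tendsto_const_div_atTop_nhds_zero_nat (i : ℝ)
      have := hc.add h2
      rw [add_zero] at this
      exact this.congr (fun n => (add_div _ _ _).symm)
    have := (tendsto_const_nhds (x := (1:ℝ))).sub h1
    rw [sub_zero] at this
    exact this)
  rw [Finset.prod_const_one] at hprod
  exact hprod

lemma G17_div_tendsto (ℓ : ℕ) :
    Tendsto (fun n : ℕ => ((ℓ * G17 n : ℕ) : ℝ) / n) atTop (nhds 0) := by
  have hlog : Tendsto (fun n : ℕ => (Real.log n) ^ 2 / n) atTop (nhds 0) := by
    have := (Real.tendsto_pow_log_div_mul_add_atTop 1 0 2 one_ne_zero).comp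
      tendsto_natCast_atTop_atTop
    simpa [Function.comp_def] using this
  have hone : Tendsto (fun n : ℕ => (1:ℝ) / n) atTop (nhds 0) :=
    tendsto_one_div_atTop_nhds_zero_nat
  have hupper : Tendsto (fun n : ℕ => (ℓ:ℝ) * (3 * ((Real.log n)^2 / n) + 1/n)) atTop (nhds 0) := by
    have := ((hlog.const_mul 3).add hone).const_mul (ℓ:ℝ)
    simpa using this
  apply tendsto_of_tendsto_of_tendsto_of_le_of_le' tendsto_const_nhds hupper
  · filter_upwards with n; positivity
  · filter_upwards [eventually_gt_atTop 0] with n hn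
    have hn0 : (0:ℝ) < n := by positivity
    have hGle : (G17 n : ℝ) ≤ 3 * (Real.log n)^2 + 1 := by
      have h1 : (⌊3 * (Real.log n) ^ 2⌋₊ : ℝ) ≤ 3 * (Real.log n)^2 :=
        Nat.floor_le (by positivity)
      simp only [G17]
      push_cast
      linarith
    have heq : (ℓ:ℝ) * (3 * ((Real.log n)^2 / n) + 1/n)
        = (ℓ:ℝ) * ((3 * (Real.log n)^2 + 1) / n) := by
      field_simp
    rw [heq]
    push_cast
    rw [mul_div_assoc]
    gcongr

/-- Let `ℓ` be a positive integer. The number of tuples of integers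
`0 ≤ n₁ < n₂ < ⋯ < n_{ℓ+1} = n` with `n_{i+1} − nᵢ > 3 log² n` for all `i = 1, …, ℓ`
is asymptotic to `n^ℓ/ℓ!` as `n → ∞`. -/
theorem stmt17 (ℓ : ℕ) (hℓ : 0 < ℓ) :
    Tendsto
      (fun n : ℕ =>
        ((Nat.card
          {t : Fin (ℓ + 1) → ℕ |
            StrictMono t ∧ t (Fin.last ℓ) = n ∧
            ∀ i : Fin ℓ,
              ((t i.succ : ℝ) - (t i.castSucc : ℝ)) > 3 * (Real.log n) ^ 2}) : ℝ) /
          ((n : ℝ) ^ ℓ / (Nat.factorial ℓ)))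
      atTop (nhds 1) := by
  have hS : ∀ n : ℕ, {t : Fin (ℓ + 1) → ℕ |
      StrictMono t ∧ t (Fin.last ℓ) = n ∧
      ∀ i : Fin ℓ,
        ((t i.succ : ℝ) - (t i.castSucc : ℝ)) > 3 * (Real.log n) ^ 2} = S17 ℓ n :=
    fun n => rfl
  simp only [hS]
  -- lower limit
  have hlo : Tendsto (fun n : ℕ =>
      ((n - ℓ * G17 n).descFactorial ℓ : ℝ) / (n : ℝ) ^ ℓ) atTop (nhds 1) :=
    desc_tendsto ℓ (fun n => ℓ * G17 n) (by exact_mod_cast G17_div_tendsto ℓ)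
  -- upper limit
  have hhi : Tendsto (fun n : ℕ =>
      (n.descFactorial ℓ : ℝ) / (n : ℝ) ^ ℓ) atTop (nhds 1) := by
    have := desc_tendsto ℓ (fun _ => 0) (by simp)
    simpa using this
  apply tendsto_of_tendsto_of_tendsto_of_le_of_le' hlo hhi
  · filter_upwards [eventually_gt_atTop 0] with n hn
    have hn0 : (0:ℝ) < n := by exact_mod_cast hn
    have hfac : (0:ℝ) < (Nat.factorial ℓ : ℝ) := by exact_mod_cast ℓ.factorial_pos
    rw [div_div_eq_mul_div, Nat.descFactorial_eq_factorial_mul_choose]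
    push_cast
    rw [mul_comm (Nat.factorial ℓ : ℝ)]
    gcongr
    exact_mod_cast S17_lower ℓ hℓ n
  · filter_upwards [eventually_gt_atTop 0] with n hn
    have hn0 : (0:ℝ) < n := by exact_mod_cast hn
    rw [div_div_eq_mul_div, Nat.descFactorial_eq_factorial_mul_choose]
    push_cast
    rw [mul_comm (Nat.factorial ℓ : ℝ)]
    gcongr
    exact_mod_cast S17_upper ℓ n
end
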